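/- Let F be a linear ordered field equipped with its order topology, X a completely F-regular space, A(X,F) an intermediate ring, and 𝒫 an ideal of closed sets in X. Then C_𝒫(X,F) ∩ A(X,F) = {f ∈ A(X,F) : cl_X(X \ Z(f)) ∈ 𝒫} is an ideal of the ring A(X,F), and for every f in this ideal, the intersection P_f of all minimal prime ideals of A(X,F) containing f is contained in this ideal; in particular, if this ideal is proper it is a z°-ideal of A(X,F). -/

import Mathlib

open Set

/-- `Pz a` : the intersection of all minimal prime ideals of `R` which contain `a`. -/
def Pz {R : Type*} [CommRing R] (a : R) : Set R :=
  ⋂ P ∈ {P : Ideal R | P ∈ minimalPrimes R ∧ a ∈ P}, (P : Set R)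

/-- A proper ideal `I` is a `z°`-ideal if `Pz a ⊆ I` for every `a ∈ I`. -/
def IsZoIdeal {R : Type*} [CommRing R] (I : Ideal R) : Prop :=
  I ≠ ⊤ ∧ ∀ a ∈ I, Pz a ⊆ (I : Set R)

/-- The zero set `Z(f)` of a continuous function `f`. -/
def ZSet {X F : Type*} [TopologicalSpace X] [TopologicalSpace F] [Zero F]
    (f : C(X, F)) : Set X := {x | f x = 0}

/-- `f` is bounded over `X` (i.e. `f ∈ B(X,F)`). -/
def BddF {X F : Type*} [TopologicalSpace X] [Field F] [LinearOrder F] [IsStrictOrderedRing F] [TopologicalSpace F]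
    (f : C(X, F)) : Prop := ∃ l : F, 0 < l ∧ ∀ x, |f x| ≤ l

/-- `X` is completely `F`-regular: Hausdorff, and points can be separated from closed
sets by bounded `F`-valued continuous functions. -/
def CompletelyFRegular (X F : Type*) [TopologicalSpace X] [Field F] [LinearOrder F] [IsStrictOrderedRing F]
    [TopologicalSpace F] : Prop :=
  T2Space X ∧ ∀ K : Set X, IsClosed K → ∀ x ∉ K, ∃ f : C(X, F),
    BddF f ∧ f x = 0 ∧ ∀ k ∈ K, f k = 1

/-- `A` is an intermediate ring: a subring of `C(X,F)` containing all of `B(X,F)`. -/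
def IsIntermediate {X F : Type*} [TopologicalSpace X] [Field F] [LinearOrder F] [IsStrictOrderedRing F]
    [TopologicalSpace F] [OrderTopology F] (A : Subring C(X, F)) : Prop :=
  ∀ f : C(X, F), BddF f → f ∈ A

/-- An ideal of closed sets in `X`: a nonempty family of closed sets, closed under
finite unions and under passing to closed subsets. -/
def IsIdealOfClosedSets {X : Type*} [TopologicalSpace X] (P : Set (Set X)) : Prop :=
  P.Nonempty ∧ (∀ A ∈ P, IsClosed A) ∧ (∀ A ∈ P, ∀ B ∈ P, A ∪ B ∈ P) ∧
    ∀ C : Set X, IsClosed C → ∀ A ∈ P, C ⊆ A → C ∈ P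

/-- `X` is an almost `P_F`-space: every nonempty zero set has nonempty interior. -/
def AlmostPF (X F : Type*) [TopologicalSpace X] [Field F] [LinearOrder F] [IsStrictOrderedRing F]
    [TopologicalSpace F] : Prop :=
  ∀ f : C(X, F), (ZSet f).Nonempty → (interior (ZSet f)).Nonempty


set_option maxHeartbeats 1000000 in
set_option synthInstance.maxHeartbeats 400000 in
/-- For an ideal P of closed sets in X, the set of f in A(X,F) with
cl_X(X minus Z(f)) in P is an ideal of A(X,F) satisfying P_f ⊆ I for all f in I;
in particular it is a z°-ideal whenever it is proper. -/
theorem stmt2 {X F : Type*} [TopologicalSpace X] [Field F] [LinearOrder F] [IsStrictOrderedRing F]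
    [TopologicalSpace F] [OrderTopology F]
    (hX : CompletelyFRegular X F)
    (A : Subring C(X, F)) (hA : IsIntermediate A)
    (P : Set (Set X)) (hP : IsIdealOfClosedSets P) :
    ∃ I : Ideal A, (I : Set A) = {f : A | closure ((ZSet (f : C(X, F)))ᶜ) ∈ P} ∧
      (∀ a ∈ I, Pz a ⊆ (I : Set A)) ∧ (I ≠ ⊤ → IsZoIdeal I) := by
  obtain ⟨hT2, hreg⟩ := hX
  obtain ⟨⟨A0, hA0⟩, hclosed, hunion, hdown⟩ := hP
  have hempty : ∅ ∈ P := hdown ∅ isClosed_empty A0 hA0 (empty_subset _)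
  -- key step : Pz
  have key : ∀ a : A, closure ((ZSet ((a : C(X,F))))ᶜ) ∈ P →
      ∀ g : A, g ∈ Pz a → closure ((ZSet ((g : C(X,F))))ᶜ) ∈ P := by
    intro a ha g hg
    have hss : (ZSet ((g : C(X,F))))ᶜ ⊆ closure ((ZSet ((a : C(X,F))))ᶜ) := by
      intro x hx
      by_contra hxc
      have hgx : (g : C(X,F)) x ≠ 0 := hx
      obtain ⟨h, ⟨l, hl, hlb⟩, hhx, hhK⟩ :=
        hreg (closure ((ZSet ((a : C(X,F))))ᶜ)) isClosed_closure x hxc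
      set c : C(X,F) := 1 - h with hcdef
      have hcbdd : BddF c := by
        refine ⟨l + 1, by linarith, fun y => ?_⟩
        have h1 := abs_le.mp (hlb y)
        have hcy : c y = 1 - h y := by simp [hcdef]
        rw [abs_le, hcy]
        constructor <;> linarith [h1.1, h1.2]
      set cA : A := ⟨c, hA c hcbdd⟩ with hcAdef
      have hcx : c x = 1 := by simp [hcdef, hhx]
      have hca : cA * a = 0 := by
        apply Subtype.ext
        apply ContinuousMap.ext
        intro z
        by_cases hz : (a : C(X,F)) z = 0
        · push_cast
          simp [hz]
        · have hz' : z ∈ closure ((ZSet ((a : C(X,F))))ᶜ) := subset_closure hz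
          have := hhK z hz'
          push_cast
          simp [hcAdef, hcdef, this]
      have hnil : ¬ IsNilpotent (g * cA) := by
        rintro ⟨n, hn⟩
        have h0 : (((g * cA) ^ n : A) : C(X,F)) x = 0 := by rw [hn]; simp
        have h2 : (((g * cA) ^ n : A) : C(X,F)) x = ((g : C(X,F)) x * c x) ^ n := by
          push_cast
          simp [hcAdef]
        rw [h2, hcx, mul_one] at h0
        exact pow_ne_zero n hgx h0
      have hnrad : (g * cA) ∉ nilradical A := by rwa [mem_nilradical]
      have hex : ∃ J : Ideal A, J.IsPrime ∧ (g * cA) ∉ J := by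
        by_contra hcon
        push_neg at hcon
        apply hnrad
        rw [nilradical_eq_sInf, Ideal.mem_sInf]
        intro J hJ
        exact hcon J hJ
      obtain ⟨J, hJprime, hJ⟩ := hex
      haveI : J.IsPrime := hJprime
      obtain ⟨Q, hQmin, hQle⟩ := Ideal.exists_minimalPrimes_le (bot_le : (⊥ : Ideal A) ≤ J)
      haveI hQprime : Q.IsPrime := hQmin.1.1
      have hcAQ : cA ∉ Q := fun hcQ => hJ (hQle (Q.mul_mem_left g hcQ))
      have haQ : a ∈ Q :=
        (hQprime.mem_or_mem (show cA * a ∈ Q from hca ▸ Q.zero_mem)).resolve_left hcAQ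
      have hgQ : g ∈ Q := by
        simp only [Pz, mem_iInter, SetLike.mem_coe, mem_setOf_eq] at hg
        exact hg Q ⟨hQmin, haQ⟩
      exact hJ (J.mul_mem_right cA (hQle hgQ))
    exact hdown _ isClosed_closure _ ha (closure_minimal hss isClosed_closure)
  refine ⟨{ carrier := {f : A | closure ((ZSet (f : C(X, F)))ᶜ) ∈ P}
          , zero_mem' := ?_, add_mem' := ?_, smul_mem' := ?_}, rfl, ?_, ?_⟩
  · intro f g hf hg
    simp only [mem_setOf_eq] at *
    have hss : (ZSet (((f + g) : A) : C(X,F)))ᶜ ⊆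
        (ZSet ((f : C(X,F))))ᶜ ∪ (ZSet ((g : C(X,F))))ᶜ := by
      intro x hx
      simp only [ZSet, mem_compl_iff, mem_setOf_eq, mem_union] at *
      by_contra hcon
      push_neg at hcon
      exact hx (by push_cast; simp [hcon.1, hcon.2])
    have hcl : closure ((ZSet (((f + g) : A) : C(X,F)))ᶜ) ⊆
        closure ((ZSet ((f : C(X,F))))ᶜ) ∪ closure ((ZSet ((g : C(X,F))))ᶜ) := by
      have := closure_mono hss
      rwa [closure_union] at this
    exact hdown _ isClosed_closure _ (hunion _ hf _ hg) hcl
  · show closure ((ZSet (((0 : A) : C(X,F))))ᶜ) ∈ P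
    have : (ZSet (((0 : A) : C(X,F))))ᶜ = ∅ := by
      ext x; simp [ZSet]
    rw [this, closure_empty]
    exact hempty
  · intro cc f hf
    simp only [mem_setOf_eq, smul_eq_mul] at *
    have hss : (ZSet (((cc * f) : A) : C(X,F)))ᶜ ⊆ (ZSet ((f : C(X,F))))ᶜ := by
      intro x hx
      simp only [ZSet, mem_compl_iff, mem_setOf_eq] at *
      intro hfx
      exact hx (by push_cast; simp [hfx])
    exact hdown _ isClosed_closure _ hf (closure_minimal (hss.trans subset_closure) isClosed_closure)
  · intro a ha g hg
    exact key a ha g hg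
  · intro hne
    exact ⟨hne, fun a ha g hg => key a ha g hg⟩
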